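/- arXiv:1906.09822 — 4 statements merged into one kernel-verified Lean document; each statement's English description precedes it below -/
import Mathlib

section
/- For a citation vector x = ⟨x₁,…,xₙ⟩ (a finite nonincreasing list of positive integers) and the vector x^[k] obtained from x by adding one citation to publication k (where k is the smallest index j with x_j = x_k, so that x^[k] is still nonincreasing), the rec-index satisfies rec(x^[k]) = max(rec(x), k·(x_k + 1)). -/
/-- A citation vector: a finite nonincreasing list of positive integers. -/
def CitVec (x : List ℕ) : Prop :=
  (∀ a ∈ x, 0 < a) ∧ List.Pairwise (· ≥ ·) x

/-- The rec-index: max over 1 ≤ i ≤ n of i·x_i (0 for the empty vector). -/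
def recIdx (x : List ℕ) : ℕ :=
  ((List.range x.length).map (fun i => (i + 1) * x.getD i 0)).foldr max 0

/-- Domination: u ⊑ x. -/
def Dom (u x : List ℕ) : Prop :=
  u.length ≤ x.length ∧ ∀ i < u.length, u.getD i 0 ≤ x.getD i 0

/-- Uniform: all entries equal. -/
def Uniform (x : List ℕ) : Prop := ∀ a ∈ x, ∀ b ∈ x, a = b

/-- x^[k]: add one citation to publication k (1-indexed; append a 1 if k = n+1). -/
def incr (x : List ℕ) (k : ℕ) : List ℕ :=
  if k ≤ x.length then x.set (k - 1) (x.getD (k - 1) 0 + 1) else x ++ [1]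

/-- k is the smallest index j with x_j = x_k (taking x_{n+1} = 0);
equivalently all earlier entries are strictly larger. -/
def MinIndex (x : List ℕ) (k : ℕ) : Prop :=
  1 ≤ k ∧ k ≤ x.length + 1 ∧ ∀ j, 1 ≤ j → j < k → x.getD (k - 1) 0 < x.getD (j - 1) 0


lemma foldr_max_init (l : List ℕ) (b : ℕ) : l.foldr max b = max (l.foldr max 0) b := by
  induction l with
  | nil => simp
  | cons a t ih => simp only [List.foldr_cons, ih]; ac_rfl

lemma foldr_max_eq_sup (f : ℕ → ℕ) (n : ℕ) :
    ((List.range n).map f).foldr max 0 = (Finset.range n).sup f := by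
  induction n with
  | zero => simp
  | succ n ih =>
    rw [List.range_succ, List.map_append, List.foldr_append, Finset.range_add_one,
      Finset.sup_insert]
    simp [foldr_max_init, ih, max_comm]

lemma recIdx_eq_sup (x : List ℕ) :
    recIdx x = (Finset.range x.length).sup (fun i => (i + 1) * x.getD i 0) :=
  foldr_max_eq_sup _ _

theorem rec_incr (x : List ℕ) (k : ℕ) (hx : CitVec x) (hk : MinIndex x k) :
    recIdx (incr x k) = max (recIdx x) (k * (x.getD (k - 1) 0 + 1)) := by
  obtain ⟨hk1, hk2, -⟩ := hk
  by_cases h : k ≤ x.length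
  · have hi0 : k - 1 < x.length := by omega
    have hk1' : k - 1 + 1 = k := by omega
    set v := x.getD (k - 1) 0 + 1 with hv
    have hget : ∀ j, (x.set (k - 1) v).getD j 0 =
        if j = k - 1 then (if k - 1 < x.length then v else 0) else x.getD j 0 := by
      intro j
      by_cases hj : j = k - 1
      · subst hj
        simp [List.getD_eq_getElem?_getD, List.getElem?_set_self', hi0]
      · simp [List.getD_eq_getElem?_getD, List.getElem?_set_ne (Ne.symm hj), hj]
    unfold incr
    rw [if_pos h, recIdx_eq_sup, recIdx_eq_sup, List.length_set]
    apply le_antisymm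
    · apply Finset.sup_le
      intro i hi
      rw [hget i]
      by_cases hji : i = k - 1
      · simp [hji, hi0, hk1']
      · simp only [if_neg hji]
        exact le_max_of_le_left (Finset.le_sup (f := fun i => (i + 1) * x.getD i 0) hi)
    · apply max_le
      · apply Finset.sup_le
        intro i hi
        refine le_trans ?_ (Finset.le_sup hi)
        rw [hget i]
        by_cases hji : i = k - 1
        · simp [hji, hi0, hv]
        · simp [hji]
      · calc k * v = (k - 1 + 1) * (x.set (k - 1) v).getD (k - 1) 0 := by
              rw [hget]; simp [hi0, hk1']
          _ ≤ _ := Finset.le_sup (f := fun i => (i + 1) * (x.set (k - 1) v).getD i 0)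
              (Finset.mem_range.mpr hi0)
  · have hkeq : k = x.length + 1 := by omega
    have hgd : x.getD (k - 1) 0 = 0 := by
      apply List.getD_eq_default
      omega
    unfold incr
    rw [if_neg h, recIdx_eq_sup, recIdx_eq_sup, List.length_append, List.length_singleton,
      hgd, Finset.range_add_one, Finset.sup_insert]
    have h1 : ∀ i < x.length, (x ++ [1]).getD i 0 = x.getD i 0 := by
      intro i hi
      rw [List.getD_append _ _ _ _ hi]
    have h2 : (x ++ [1]).getD x.length 0 = 1 := by
      simp [List.getD_eq_getElem?_getD, List.getElem?_append_right (le_refl x.length)]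
    rw [h2]
    have : (Finset.range x.length).sup (fun i => (i + 1) * (x ++ [1]).getD i 0)
        = (Finset.range x.length).sup (fun i => (i + 1) * x.getD i 0) := by
      apply Finset.sup_congr rfl
      intro i hi
      rw [h1 i (Finset.mem_range.mp hi)]
    rw [this, hkeq]
    simp [max_comm]
end

section
/- A bibliometric index f (a function from citation vectors to nonnegative reals with f(⟨⟩) = 0) satisfies monotonicity, uniform citation, and uniform equivalence if and only if f(x) = rec(x) = max_i i·x_i for every citation vector x. -/
/- ### auxiliary lemmas -/

lemma le_foldr_max {l : List ℕ} {a : ℕ} (h : a ∈ l) : a ≤ l.foldr max 0 := by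
  induction l with
  | nil => cases h
  | cons b t ih =>
    rcases List.mem_cons.mp h with rfl | h
    · exact le_max_left _ _
    · exact le_trans (ih h) (le_max_right _ _)

lemma foldr_max_le {l : List ℕ} {b : ℕ} (h : ∀ a ∈ l, a ≤ b) : l.foldr max 0 ≤ b := by
  induction l with
  | nil => exact Nat.zero_le _
  | cons c t ih =>
    exact max_le (h c List.mem_cons_self) (ih fun a ha => h a (List.mem_cons_of_mem _ ha))

lemma foldr_max_mem {l : List ℕ} (h : l ≠ []) : l.foldr max 0 ∈ l := by
  induction l with
  | nil => exact absurd rfl h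
  | cons c t ih =>
    cases t with
    | nil => simp
    | cons d s =>
      rcases max_choice c ((d :: s).foldr max 0) with h' | h'
      · rw [List.foldr_cons, h']; exact List.mem_cons_self
      · rw [List.foldr_cons, h']
        exact List.mem_cons_of_mem _ (ih (by simp))

lemma le_recIdx {x : List ℕ} {i : ℕ} (h : i < x.length) :
    (i + 1) * x.getD i 0 ≤ recIdx x := by
  apply le_foldr_max
  exact List.mem_map.mpr ⟨i, List.mem_range.mpr h, rfl⟩

lemma recIdx_le {x : List ℕ} {b : ℕ} (h : ∀ i < x.length, (i + 1) * x.getD i 0 ≤ b) :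
    recIdx x ≤ b := by
  apply foldr_max_le
  intro a ha
  rcases List.mem_map.mp ha with ⟨i, hi, rfl⟩
  exact h i (List.mem_range.mp hi)

lemma recIdx_attained {x : List ℕ} (h : x ≠ []) :
    ∃ i < x.length, recIdx x = (i + 1) * x.getD i 0 := by
  have hne : ((List.range x.length).map (fun i => (i + 1) * x.getD i 0)) ≠ [] := by
    simp [List.length_pos_iff.mpr h, Nat.pos_iff_ne_zero.mp (List.length_pos_iff.mpr h)]
  have := foldr_max_mem hne
  rcases List.mem_map.mp this with ⟨i, hi, hval⟩
  exact ⟨i, List.mem_range.mp hi, hval.symm⟩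

lemma getD_replicate (n c i : ℕ) (h : i < n) : (List.replicate n c).getD i 0 = c := by
  rw [List.getD_eq_getElem _ _ (by simpa using h)]
  simp

lemma recIdx_replicate (n c : ℕ) : recIdx (List.replicate n c) = n * c := by
  apply le_antisymm
  · apply recIdx_le
    intro i hi
    rw [List.length_replicate] at hi
    rw [getD_replicate n c i hi]
    exact Nat.mul_le_mul_right c hi
  · cases n with
    | zero => simp
    | succ m =>
      have h : m < (List.replicate (m + 1) c).length := by simp
      have := le_recIdx h
      rwa [getD_replicate (m + 1) c m (by omega)] at this

lemma sorted_getD {x : List ℕ} (hs : List.Pairwise (· ≥ ·) x) {i j : ℕ}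
    (hij : i ≤ j) (hj : j < x.length) : x.getD j 0 ≤ x.getD i 0 := by
  rw [List.getD_eq_getElem _ _ hj, List.getD_eq_getElem _ _ (lt_of_le_of_lt hij hj)]
  rcases eq_or_lt_of_le hij with rfl | hij'
  · exact le_refl _
  · exact List.pairwise_iff_get.mp hs ⟨i, _⟩ ⟨j, _⟩ hij'

lemma getD_pos {x : List ℕ} (hx : CitVec x) {i : ℕ} (h : i < x.length) : 0 < x.getD i 0 := by
  rw [List.getD_eq_getElem _ _ h]
  exact hx.1 _ (List.getElem_mem h)

lemma citvec_replicate (n c : ℕ) (hc : 0 < c) : CitVec (List.replicate n c) := by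
  constructor
  · intro a ha; rw [List.eq_of_mem_replicate ha]; exact hc
  · simp [List.pairwise_replicate]

lemma uniform_replicate (n c : ℕ) : Uniform (List.replicate n c) := by
  intro a ha b hb
  rw [List.eq_of_mem_replicate ha, List.eq_of_mem_replicate hb]

lemma uniform_eq_replicate {x : List ℕ} (hx : Uniform x) :
    x = List.replicate x.length (x.getD 0 0) := by
  cases x with
  | nil => rfl
  | cons a t =>
    apply List.eq_replicate_of_mem
    intro b hb
    have : (a :: t).getD 0 0 = a := rfl
    rw [this]
    exact hx b hb a List.mem_cons_self

/-- rec of a uniform citation vector is its sum. -/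
lemma recIdx_uniform {x : List ℕ} (hx : Uniform x) : recIdx x = x.sum := by
  conv_lhs => rw [uniform_eq_replicate hx]
  conv_rhs => rw [uniform_eq_replicate hx]
  rw [recIdx_replicate, List.sum_replicate, smul_eq_mul]

theorem rec_characterisation (f : List ℕ → ℝ)
    (hnonneg : ∀ x, CitVec x → 0 ≤ f x) (hbase : f [] = 0) :
    ((∀ x y, CitVec x → CitVec y → Dom x y → f x ≤ f y) ∧
     (∀ x, CitVec x → Uniform x → f x = x.sum) ∧
     (∀ x, CitVec x → ∃ u, CitVec u ∧ Uniform u ∧ Dom u x ∧ f x = f u)) ↔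
    (∀ x, CitVec x → f x = recIdx x) := by
  constructor
  · rintro ⟨hM, hUC, hUE⟩ x hx
    apply le_antisymm
    · -- f x ≤ recIdx x via UE
      rcases hUE x hx with ⟨u, hu, huni, hdom, hfu⟩
      rw [hfu, hUC u hu huni]
      have : u.sum ≤ recIdx x := by
        rw [uniform_eq_replicate huni, List.sum_replicate, smul_eq_mul]
        cases hm : u.length with
        | zero => simp
        | succ m =>
          have hmlt : m < x.length := by
            have := hdom.1; omega
          have hle : u.getD 0 0 ≤ x.getD m 0 := by
            have h1 : u.getD m 0 ≤ x.getD m 0 := hdom.2 m (by omega)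
            have h2 : u.getD m 0 = u.getD 0 0 := by
              conv_lhs => rw [uniform_eq_replicate huni]
              rw [getD_replicate _ _ m (by omega)]
            omega
          calc (m + 1) * u.getD 0 0 ≤ (m + 1) * x.getD m 0 := Nat.mul_le_mul_left _ hle
            _ ≤ recIdx x := le_recIdx hmlt
      exact_mod_cast this
    · -- recIdx x ≤ f x
      cases hxe : x with
      | nil => simp [hbase, recIdx]
      | cons a t =>
        subst hxe
        rcases recIdx_attained (x := a :: t) (by simp) with ⟨i, hi, hval⟩
        set c := (a :: t).getD i 0 with hc
        have hcpos : 0 < c := getD_pos hx hi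
        set u := List.replicate (i + 1) c with hu
        have hcu : CitVec u := citvec_replicate _ _ hcpos
        have hdom : Dom u (a :: t) := by
          constructor
          · have hi' : i < t.length + 1 := by simpa using hi
            simp only [hu, List.length_replicate, List.length_cons]; omega
          · intro j hj
            rw [hu, List.length_replicate] at hj
            rw [hu, getD_replicate _ _ j hj]
            exact sorted_getD hx.2 (by omega) hi
        have := hM u (a :: t) hcu hx hdom
        have hfu : f u = ((i + 1) * c : ℕ) := by
          rw [hUC u hcu (uniform_replicate _ _)]
          rw [hu, List.sum_replicate, smul_eq_mul]
        rw [hval]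
        calc ((i + 1) * c : ℕ) = f u := hfu.symm
          _ ≤ f (a :: t) := this
  · intro hrec
    refine ⟨?_, ?_, ?_⟩
    · intro x y hx hy hdom
      rw [hrec x hx, hrec y hy]
      have : recIdx x ≤ recIdx y := by
        apply recIdx_le
        intro i hi
        calc (i + 1) * x.getD i 0 ≤ (i + 1) * y.getD i 0 :=
              Nat.mul_le_mul_left _ (hdom.2 i hi)
          _ ≤ recIdx y := le_recIdx (lt_of_lt_of_le hi hdom.1)
      exact_mod_cast this
    · intro x hx huni
      rw [hrec x hx, recIdx_uniform huni]
    · intro x hx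
      cases hxe : x with
      | nil =>
        subst hxe
        refine ⟨[], ⟨by simp, by simp⟩, ?_, ⟨le_refl _, by simp⟩, rfl⟩
        intro a ha; cases ha
      | cons a t =>
        subst hxe
        rcases recIdx_attained (x := a :: t) (by simp) with ⟨i, hi, hval⟩
        set c := (a :: t).getD i 0 with hc
        have hcpos : 0 < c := getD_pos hx hi
        refine ⟨List.replicate (i + 1) c, citvec_replicate _ _ hcpos,
          uniform_replicate _ _, ?_, ?_⟩
        · constructor
          · have hi' : i < t.length + 1 := by simpa using hi
            simp only [List.length_replicate, List.length_cons]; omega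
          · intro j hj
            rw [List.length_replicate] at hj
            rw [getD_replicate _ _ j hj]
            exact sorted_getD hx.2 (by omega) hi
        · rw [hrec _ hx, hrec _ (citvec_replicate _ _ hcpos), recIdx_replicate, hval]
end

section
/- The index f(x) = n·x_n (the number of publications times the minimum citation count, with f(⟨⟩) = 0) satisfies uniform citation and uniform equivalence but is not monotonic. -/
/-- The index n·x_n: number of publications times minimum citation count. -/
def minIdx (x : List ℕ) : ℕ := x.length * x.getD (x.length - 1) 0

lemma sum_of_const (l : List ℕ) (a : ℕ) (hall : ∀ b ∈ l, b = a) : l.sum = l.length * a := by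
  induction l with
  | nil => simp
  | cons c m ihm =>
    simp only [List.sum_cons, List.length_cons]
    rw [hall c List.mem_cons_self, ihm (fun b hb => hall b (List.mem_cons_of_mem _ hb))]
    ring

lemma uniform_sum (x : List ℕ) (hu : Uniform x) : minIdx x = x.sum := by
  unfold minIdx
  induction x with
  | nil => simp
  | cons a l ih =>
    have hall : ∀ b ∈ l, b = a := fun b hb => hu b (List.mem_cons_of_mem _ hb) a List.mem_cons_self
    have hsum : l.sum = l.length * a := sum_of_const l a hall
    have hlast : (a :: l).getD ((a :: l).length - 1) 0 = a := by
      rcases List.eq_nil_or_concat l with h | ⟨m, b, rfl⟩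
      · subst h; simp
      · have hb : b = a := hall b (by simp)
        subst hb
        simp [List.getD_eq_getElem?_getD]
    rw [hlast]
    simp [List.sum_cons, hsum]
    ring

lemma last_le (x : List ℕ) (hs : List.Pairwise (· ≥ ·) x) (i : ℕ) (hi : i < x.length) :
    x.getD (x.length - 1) 0 ≤ x.getD i 0 := by
  have h1 : x.length - 1 < x.length := Nat.sub_lt (Nat.pos_of_ne_zero (by omega)) one_pos
  rw [List.getD_eq_getElem x 0 h1, List.getD_eq_getElem x 0 hi]
  rcases Nat.lt_or_ge i (x.length - 1) with h | h
  · exact List.pairwise_iff_get.mp hs ⟨i, hi⟩ ⟨x.length - 1, h1⟩ h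
  · have : i = x.length - 1 := le_antisymm (Nat.le_sub_one_of_lt hi) h
    simp [this]

lemma ue_aux (x : List ℕ) (hx : CitVec x) :
    ∃ u, CitVec u ∧ Uniform u ∧ Dom u x ∧ (minIdx x : ℝ) = minIdx u := by
  set n := x.length with hn
  set m := x.getD (n - 1) 0 with hm
  refine ⟨List.replicate n m, ?_, ?_, ?_, ?_⟩
  · constructor
    · intro a ha
      rw [List.eq_of_mem_replicate ha]
      rcases Nat.eq_zero_or_pos n with h0 | h0
      · exact absurd ha (by simp [h0])
      · have hlt : n - 1 < n := Nat.sub_lt h0 one_pos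
        have : x.getD (n - 1) 0 ∈ x := by
          rw [List.getD_eq_getElem x 0 hlt]; exact List.getElem_mem _
        exact hx.1 _ this
    · exact List.pairwise_replicate.mpr (Or.inr (le_refl m))
  · intro a ha b hb
    rw [List.eq_of_mem_replicate ha, List.eq_of_mem_replicate hb]
  · refine ⟨by simp [hn], fun i hi => ?_⟩
    simp only [List.length_replicate] at hi
    rw [List.getD_eq_getElem _ 0 (by simpa using hi), List.getElem_replicate]
    exact last_le x hx.2 i hi
  · unfold minIdx
    rcases Nat.eq_zero_or_pos n with h0 | h0
    · simp [← hn, h0]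
    · have : (List.replicate n m).getD (n - 1) 0 = m := by
        rw [List.getD_eq_getElem _ 0 (by simp; omega), List.getElem_replicate]
      rw [List.length_replicate, this]

theorem min_UC_UE_not_M :
    (∀ x, CitVec x → Uniform x → (minIdx x : ℝ) = x.sum) ∧
    (∀ x, CitVec x → ∃ u, CitVec u ∧ Uniform u ∧ Dom u x ∧ (minIdx x : ℝ) = minIdx u) ∧
    ¬ (∀ x y, CitVec x → CitVec y → Dom x y → (minIdx x : ℝ) ≤ minIdx y) := by
  refine ⟨fun x _ hu => by exact_mod_cast congrArg (Nat.cast : ℕ → ℝ) (uniform_sum x hu),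
    ue_aux, fun h => ?_⟩
  have hx : CitVec [3] := ⟨by simp, by simp⟩
  have hy : CitVec [3, 1] := ⟨by intro a ha; fin_cases ha <;> norm_num, by
    simp [List.Pairwise]⟩
  have hd : Dom [3] [3, 1] := by
    refine ⟨by simp, fun i hi => ?_⟩
    have h0 : i = 0 := by simpa using hi
    subst h0; simp [List.getD]
  have := h [3] [3, 1] hx hy hd
  norm_num [minIdx, List.getD] at this
end

section
/- The square of the h-index, i.e. f(x) = h(x)², where h(x) is the largest h with x_h ≥ h, satisfies monotonicity and uniform equivalence but does not satisfy uniform citation. -/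
/-- The h-index: the largest h with x_h ≥ h. -/
def hIdx (x : List ℕ) : ℕ :=
  Nat.findGreatest (fun h => h ≤ x.getD (h - 1) 0) x.length

lemma hIdx_le (x : List ℕ) : hIdx x ≤ x.length := Nat.findGreatest_le _

lemma hIdx_spec (x : List ℕ) : hIdx x ≤ x.getD (hIdx x - 1) 0 :=
  Nat.findGreatest_spec (P := fun h => h ≤ x.getD (h - 1) 0) (Nat.zero_le _) (Nat.zero_le _)

lemma hIdx_mono (x y : List ℕ) (hd : Dom x y) : hIdx x ≤ hIdx y := by
  rcases Nat.eq_zero_or_pos (hIdx x) with h0 | hp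
  · simp [h0]
  · apply Nat.le_findGreatest (le_trans (hIdx_le x) hd.1)
    calc hIdx x ≤ x.getD (hIdx x - 1) 0 := hIdx_spec x
    _ ≤ y.getD (hIdx x - 1) 0 := hd.2 _ (lt_of_lt_of_le (Nat.sub_lt hp one_pos) (hIdx_le x))

lemma hIdx_replicate (h : ℕ) : hIdx (List.replicate h h) = h := by
  apply le_antisymm
  · simpa using hIdx_le (List.replicate h h)
  · rcases Nat.eq_zero_or_pos h with h0 | hp
    · simp [h0]
    · apply Nat.le_findGreatest (by simp)
      rw [List.getD_eq_getElem?_getD, List.getElem?_replicate]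
      simp [Nat.sub_lt hp one_pos]

theorem hsq_M_UE_not_UC :
    (∀ x y, CitVec x → CitVec y → Dom x y → ((hIdx x ^ 2 : ℕ) : ℝ) ≤ (hIdx y ^ 2 : ℕ)) ∧
    (∀ x, CitVec x → ∃ u, CitVec u ∧ Uniform u ∧ Dom u x ∧
      ((hIdx x ^ 2 : ℕ) : ℝ) = (hIdx u ^ 2 : ℕ)) ∧
    ¬ (∀ x, CitVec x → Uniform x → ((hIdx x ^ 2 : ℕ) : ℝ) = x.sum) := by
  refine ⟨?_, ?_, ?_⟩
  · intro x y _ _ hd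
    have := hIdx_mono x y hd
    exact_mod_cast Nat.pow_le_pow_left this 2
  · intro x hx
    refine ⟨List.replicate (hIdx x) (hIdx x), ?_, ?_, ?_, ?_⟩
    · constructor
      · intro a ha
        rw [List.eq_of_mem_replicate ha]
        rcases Nat.eq_zero_or_pos (hIdx x) with h0 | hp
        · simp [h0] at ha
        · exact hp
      · exact List.pairwise_replicate.mpr (Or.inr (le_refl (hIdx x)))
    · intro a ha b hb
      rw [List.eq_of_mem_replicate ha, List.eq_of_mem_replicate hb]
    · constructor
      · simpa using hIdx_le x
      · intro i hi
        simp only [List.length_replicate] at hi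
        rw [List.getD_eq_getElem?_getD, List.getElem?_replicate, if_pos hi]
        -- need hIdx x ≤ x.getD i 0 using sortedness
        have h1 : hIdx x ≤ x.getD (hIdx x - 1) 0 := hIdx_spec x
        have hlt : hIdx x - 1 < x.length := lt_of_lt_of_le (by omega) (hIdx_le x)
        have hilt : i < x.length := lt_of_lt_of_le hi (hIdx_le x)
        have : x.getD (hIdx x - 1) 0 ≤ x.getD i 0 := by
          rw [List.getD_eq_getElem?_getD, List.getD_eq_getElem?_getD,
            List.getElem?_eq_getElem hlt, List.getElem?_eq_getElem hilt]
          exact hx.2.rel_get_of_le (a := ⟨i, hilt⟩) (b := ⟨hIdx x - 1, hlt⟩) (by simp; omega)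
        exact le_trans h1 this
    · rw [hIdx_replicate]
  · intro H
    have h3 : hIdx [3] = 1 := by decide
    have := H [3] ⟨by simp, by simp⟩ (by intro a ha b hb; simp at ha hb; omega)
    rw [h3] at this
    norm_num at this
end
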